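/- arXiv:math/0010200 — 11 statements merged into one kernel-verified Lean document; each statement's English description precedes it below -/
import Mathlib

section
/- For vectors k, p, q in Z^2 \ {0} with k + p + q = 0, the coefficients A(p,q) = (1/2)(|q|^{-2} - |p|^{-2})(p_1 q_2 - p_2 q_1) satisfy the identity A(p,q) + A(q,k) + A(k,p) = 0. -/
/-- The coefficient `A(p,q) = (1/2)(1/|q|² - 1/|p|²)(p₁q₂ - p₂q₁)` of the
2D Euler kinetic equation, for `p, q ∈ ℤ²`. -/
noncomputable def eulerA (p q : ℤ × ℤ) : ℝ :=
  (1 / 2) * (((q.1 : ℝ) ^ 2 + (q.2 : ℝ) ^ 2)⁻¹ - ((p.1 : ℝ) ^ 2 + (p.2 : ℝ) ^ 2)⁻¹) *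
    ((p.1 : ℝ) * (q.2 : ℝ) - (p.2 : ℝ) * (q.1 : ℝ))

theorem eulerA_cyclic_sum (k p q : ℤ × ℤ) (hk : k ≠ 0) (hp : p ≠ 0) (hq : q ≠ 0)
    (hsum : k + p + q = 0) :
    eulerA p q + eulerA q k + eulerA k p = 0 := by
  have h1 : k.1 = -p.1 - q.1 := by
    have := congrArg Prod.fst hsum; simp at this; linarith
  have h2 : k.2 = -p.2 - q.2 := by
    have := congrArg Prod.snd hsum; simp at this; linarith
  simp only [eulerA, h1, h2]
  push_cast
  ring
end

section
/- For vectors k, p, q in Z^2 \ {0} with k + p + q = 0, the coefficients A satisfy |k|^{-2} A(p,q) + |p|^{-2} A(q,k) + |q|^{-2} A(k,p) = 0. -/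
theorem eulerA_weighted_cyclic_sum (k p q : ℤ × ℤ) (hk : k ≠ 0) (hp : p ≠ 0) (hq : q ≠ 0)
    (hsum : k + p + q = 0) :
    (((k.1 : ℝ) ^ 2 + (k.2 : ℝ) ^ 2)⁻¹) * eulerA p q
      + (((p.1 : ℝ) ^ 2 + (p.2 : ℝ) ^ 2)⁻¹) * eulerA q k
      + (((q.1 : ℝ) ^ 2 + (q.2 : ℝ) ^ 2)⁻¹) * eulerA k p = 0 := by
  have hq1 : (q.1 : ℝ) = -(k.1 : ℝ) - (p.1 : ℝ) := by
    have h : k.1 + p.1 + q.1 = 0 := congrArg Prod.fst hsum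
    have : ((k.1 + p.1 + q.1 : ℤ) : ℝ) = 0 := by rw [h]; simp
    push_cast at this; linarith
  have hq2 : (q.2 : ℝ) = -(k.2 : ℝ) - (p.2 : ℝ) := by
    have h : k.2 + p.2 + q.2 = 0 := congrArg Prod.snd hsum
    have : ((k.2 + p.2 + q.2 : ℤ) : ℝ) = 0 := by rw [h]; simp
    push_cast at this; linarith
  have nz : ∀ r : ℤ × ℤ, r ≠ 0 → ((r.1 : ℝ) ^ 2 + (r.2 : ℝ) ^ 2) ≠ 0 := by
    intro r hr h
    apply hr
    have h1 : (r.1 : ℝ) = 0 := by nlinarith [sq_nonneg (r.1 : ℝ), sq_nonneg (r.2 : ℝ)]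
    have h2 : (r.2 : ℝ) = 0 := by nlinarith [sq_nonneg (r.1 : ℝ), sq_nonneg (r.2 : ℝ)]
    exact Prod.ext (by exact_mod_cast h1) (by exact_mod_cast h2)
  have hknz := nz k hk
  have hpnz := nz p hp
  have hqnz := nz q hq
  simp only [eulerA] at *
  rw [hq1, hq2] at *
  field_simp
  ring
end

section
/- The 4x4 matrix M with rows (0, -A_2 Γ, 0, 0), (A_1 Γ, 0, -A_3 Γ, 0), (0, A_2 Γ, 0, -A_4 Γ), (0, 0, A_3 Γ, 0), where A_1 = A_4 = -3/10 and A_2 = A_3 = 1/2 and Γ > 0, has characteristic polynomial λ^4 + (Γ^2/b) λ^2 + c for appropriate constants, and its eigenvalues are the four complex numbers ±(Γ/(2√10))√(1 ± i√35); in particular M has an eigenvalue with strictly positive real part. -/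
open Polynomial Complex

lemma spec_iff_root_aux {n : Type*} [Fintype n] [DecidableEq n] (M : Matrix n n ℂ) (z : ℂ) :
    z ∈ spectrum ℂ M ↔ M.charpoly.IsRoot z := by
  rw [spectrum.mem_iff, Polynomial.IsRoot, Matrix.charpoly, eval_det,
    Matrix.matPolyEquiv_charmatrix, eval_sub, eval_X, eval_C]
  have h : algebraMap ℂ (Matrix n n ℂ) z = Matrix.scalar n z := rfl
  rw [← h, Matrix.isUnit_iff_isUnit_det, isUnit_iff_ne_zero, not_ne_iff]


/-- The four-mode Galerkin truncation matrix (with `A₁ = A₄ = -3/10`, `A₂ = A₃ = 1/2`)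
has characteristic polynomial `λ⁴ + (Γ²/b) λ² + c` for appropriate constants, its
eigenvalues are exactly `±(Γ/(2√10))√(1 ± i√35)`, and in particular it has an
eigenvalue with strictly positive real part. -/
theorem fourMode_truncation_eigenvalues (Γ : ℝ) (hΓ : 0 < Γ) :
    let A₁ : ℝ := -(3 / 10); let A₂ : ℝ := 1 / 2; let A₃ : ℝ := 1 / 2
    let A₄ : ℝ := -(3 / 10)
    let M : Matrix (Fin 4) (Fin 4) ℂ :=
      (!![0, -A₂ * Γ, 0, 0;
          A₁ * Γ, 0, -A₃ * Γ, 0;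
          0, A₂ * Γ, 0, -A₄ * Γ;
          0, 0, A₃ * Γ, 0]).map Complex.ofReal
    (∃ b c : ℝ, M.charpoly = X ^ 4 + C ((Γ ^ 2 / b : ℝ) : ℂ) * X ^ 2 + C ((c : ℝ) : ℂ))
    ∧ spectrum ℂ M =
        {z : ℂ | ∃ s t : ℝ, (s = 1 ∨ s = -1) ∧ (t = 1 ∨ t = -1) ∧
          z = (s : ℂ) * ((Γ : ℝ) : ℂ) / (2 * ((Real.sqrt 10 : ℝ) : ℂ)) *
            ((1 + (t : ℂ) * Complex.I * ((Real.sqrt 35 : ℝ) : ℂ)) ^ ((1 : ℂ) / 2))}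
    ∧ ∃ z ∈ spectrum ℂ M, 0 < z.re := by
  intro A₁ A₂ A₃ A₄ M
  -- the characteristic polynomial
  have hcp : M.charpoly = X ^ 4 + C (-(Γ:ℂ)^2/20) * X ^ 2 + C (9*(Γ:ℂ)^4/400) := by
    rw [Matrix.charpoly]
    simp (config := {decide := true}) [M, A₁, A₂, A₃, A₄, Matrix.charmatrix,
      Matrix.det_succ_row_zero, Fin.sum_univ_succ, Matrix.submatrix, Fin.succAbove,
      Matrix.diagonal_apply]
    apply Polynomial.funext
    intro x
    simp [eval_mul, eval_add, eval_sub, eval_pow]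
    ring
  -- basic numerics
  have h10 : ((Real.sqrt 10 : ℝ) : ℂ)^2 = 10 := by
    norm_cast
    rw [Real.sq_sqrt] <;> norm_num
  have h35 : ((Real.sqrt 35 : ℝ) : ℂ)^2 = 35 := by
    norm_cast
    rw [Real.sq_sqrt] <;> norm_num
  have h10ne : ((Real.sqrt 10 : ℝ) : ℂ) ≠ 0 := by
    simpa using (Real.sqrt_pos.2 (by norm_num : (0:ℝ) < 10)).ne'
  have hhalf : ((1:ℂ)/2) = ((2:ℕ) : ℂ)⁻¹ := by norm_num
  have hsq : ∀ w : ℂ, (w ^ ((1:ℂ)/2)) ^ 2 = w := by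
    intro w
    rw [hhalf]
    exact Complex.cpow_nat_inv_pow w (by norm_num)
  set α : ℂ := (Γ:ℂ) / (2 * ((Real.sqrt 10 : ℝ) : ℂ)) *
      ((1 + (1:ℂ) * Complex.I * ((Real.sqrt 35 : ℝ) : ℂ)) ^ ((1:ℂ)/2)) with hαdef
  set β : ℂ := (Γ:ℂ) / (2 * ((Real.sqrt 10 : ℝ) : ℂ)) *
      ((1 + (-1:ℂ) * Complex.I * ((Real.sqrt 35 : ℝ) : ℂ)) ^ ((1:ℂ)/2)) with hβdef
  have hα2 : α ^ 2 = (Γ:ℂ)^2/40 * (1 + Complex.I * ((Real.sqrt 35 : ℝ) : ℂ)) := by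
    rw [hαdef, mul_pow, hsq, div_pow, mul_pow]
    rw [h10]
    ring
  have hβ2 : β ^ 2 = (Γ:ℂ)^2/40 * (1 - Complex.I * ((Real.sqrt 35 : ℝ) : ℂ)) := by
    rw [hβdef, mul_pow, hsq, div_pow, mul_pow]
    rw [h10]
    ring
  have hI35 : (Complex.I * ((Real.sqrt 35 : ℝ) : ℂ))^2 = -35 := by
    rw [mul_pow, Complex.I_sq, h35]; ring
  have key : ∀ z : ℂ, z^4 + (-(Γ:ℂ)^2/20)*z^2 + 9*(Γ:ℂ)^4/400
      = (z - α) * (z + α) * ((z - β) * (z + β)) := by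
    intro z
    have e : (z - α) * (z + α) * ((z - β) * (z + β)) = (z^2 - α^2) * (z^2 - β^2) := by ring
    rw [e, hα2, hβ2]
    linear_combination ((Γ:ℂ)^4/1600) * hI35
  -- spectrum description
  have hspec : spectrum ℂ M =
      {z : ℂ | ∃ s t : ℝ, (s = 1 ∨ s = -1) ∧ (t = 1 ∨ t = -1) ∧
        z = (s : ℂ) * ((Γ : ℝ) : ℂ) / (2 * ((Real.sqrt 10 : ℝ) : ℂ)) *
          ((1 + (t : ℂ) * Complex.I * ((Real.sqrt 35 : ℝ) : ℂ)) ^ ((1 : ℂ) / 2))} := by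
    ext z
    rw [spec_iff_root_aux, hcp]
    simp only [Polynomial.IsRoot, eval_add, eval_mul, eval_pow, eval_X, eval_C]
    rw [key z, mul_eq_zero, mul_eq_zero, mul_eq_zero, sub_eq_zero, sub_eq_zero,
      add_eq_zero_iff_eq_neg, add_eq_zero_iff_eq_neg]
    constructor
    · rintro ((rfl | rfl) | (rfl | rfl))
      · exact ⟨1, 1, Or.inl rfl, Or.inl rfl, by push_cast; rw [hαdef]; ring⟩
      · exact ⟨-1, 1, Or.inr rfl, Or.inl rfl, by push_cast; rw [hαdef]; ring⟩
      · exact ⟨1, -1, Or.inl rfl, Or.inr rfl, by push_cast; rw [hβdef]; ring⟩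
      · exact ⟨-1, -1, Or.inr rfl, Or.inr rfl, by push_cast; rw [hβdef]; ring⟩
    · rintro ⟨s, t, (rfl | rfl), (rfl | rfl), rfl⟩
      · exact Or.inl (Or.inl (by push_cast; rw [hαdef]; ring))
      · exact Or.inr (Or.inl (by push_cast; rw [hβdef]; ring))
      · exact Or.inl (Or.inr (by push_cast; rw [hαdef]; ring))
      · exact Or.inr (Or.inr (by push_cast; rw [hβdef]; ring))
  refine ⟨⟨-20, 9*Γ^4/400, ?_⟩, hspec, ?_⟩
  · rw [hcp]; push_cast; ring_nf
  · -- α has nonzero real part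
    have him : (α ^ 2).im = Γ^2/40 * Real.sqrt 35 := by
      rw [hα2]
      simp [Complex.mul_im, ← Complex.ofReal_pow]
    have himpos : 0 < (α ^ 2).im := by
      rw [him]
      positivity
    have hre : α.re ≠ 0 := by
      intro h0
      rw [sq] at himpos
      rw [Complex.mul_im, h0] at himpos
      simp at himpos
    have hmemα : α ∈ spectrum ℂ M := by
      rw [hspec]
      exact ⟨1, 1, Or.inl rfl, Or.inl rfl, by push_cast; rw [hαdef]; ring⟩
    have hmemnα : -α ∈ spectrum ℂ M := by
      rw [hspec]
      exact ⟨-1, 1, Or.inr rfl, Or.inl rfl, by push_cast; rw [hαdef]; ring⟩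
    rcases lt_or_gt_of_ne hre with h | h
    · exact ⟨-α, hmemnα, by simpa using neg_pos.2 h⟩
    · exact ⟨α, hmemα, h⟩
end

section
/- For the 4x4 chopped linear system matrix with superdiagonal entries -A_{5j+2}Γ, -A_{5j+3}Γ, -A_{5j+4}Γ and subdiagonal entries A_{5j+1}Γ, A_{5j+2}Γ, A_{5j+3}Γ, if b = -(A_{5j+1}A_{5j+2} + A_{5j+2}A_{5j+3} + A_{5j+3}A_{5j+4}) < 0, c = A_{5j+1}A_{5j+2}A_{5j+3}A_{5j+4} > 0, and 0 < b^2 - 4c < b^2, then the eigenvalues are λ = ± i (Γ/√2) √|b ± √(b^2 - 4c)|, i.e., two complex-conjugate pairs of purely imaginary numbers. -/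
private lemma chopped_det_aux (a₁ a₂ a₃ a₄ Γ : ℝ) (z : ℂ) :
    Matrix.det (algebraMap ℂ (Matrix (Fin 4) (Fin 4) ℂ) z -
      (!![0, -a₂ * Γ, 0, 0;
          a₁ * Γ, 0, -a₃ * Γ, 0;
          0, a₂ * Γ, 0, -a₄ * Γ;
          0, 0, a₃ * Γ, 0]).map Complex.ofReal) =
    z ^ 4 + (a₁ * a₂ + a₂ * a₃ + a₃ * a₄) * Γ ^ 2 * z ^ 2 + (a₁ * a₂ * a₃ * a₄) * Γ ^ 4 := by
  simp (config := { decide := true }) [Matrix.det_succ_row_zero, Fin.sum_univ_succ,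
    Fin.succAbove, Matrix.algebraMap_matrix_apply, Matrix.map_apply,
    show Fin.succ (2:Fin 3) = 3 by rfl, show Fin.castSucc (2:Fin 3) = 2 by rfl]
  ring

/-- Eigenvalues of the chopped linear system: under the stated sign conditions on
`b = -(a₁a₂ + a₂a₃ + a₃a₄)` and `c = a₁a₂a₃a₄`, the spectrum consists of the two
complex-conjugate purely imaginary pairs `± i (Γ/√2) √|b ± √(b² - 4c)|`. -/
theorem chopped_system_eigenvalues (a₁ a₂ a₃ a₄ Γ : ℝ)
    (b c : ℝ) (hb : b = -(a₁ * a₂ + a₂ * a₃ + a₃ * a₄)) (hc : c = a₁ * a₂ * a₃ * a₄)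
    (hbneg : b < 0) (hcpos : 0 < c) (hdisc : 0 < b ^ 2 - 4 * c) (hdisc' : b ^ 2 - 4 * c < b ^ 2) :
    let M : Matrix (Fin 4) (Fin 4) ℂ :=
      (!![0, -a₂ * Γ, 0, 0;
          a₁ * Γ, 0, -a₃ * Γ, 0;
          0, a₂ * Γ, 0, -a₄ * Γ;
          0, 0, a₃ * Γ, 0]).map Complex.ofReal
    spectrum ℂ M =
      {z : ℂ | ∃ s t : ℝ, (s = 1 ∨ s = -1) ∧ (t = 1 ∨ t = -1) ∧
        z = (s : ℂ) * Complex.I * ((Γ / Real.sqrt 2 : ℝ) : ℂ) *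
          ((Real.sqrt |b + t * Real.sqrt (b ^ 2 - 4 * c)| : ℝ) : ℂ)} := by
  intro M
  set D : ℝ := Real.sqrt (b ^ 2 - 4 * c) with hD
  have hD0 : 0 ≤ D := Real.sqrt_nonneg _
  have hD2 : D ^ 2 = b ^ 2 - 4 * c := Real.sq_sqrt hdisc.le
  have hDlt : D < -b := by
    have h1 : D ^ 2 < (-b) ^ 2 := by nlinarith
    exact lt_of_pow_lt_pow_left₀ 2 (by linarith) h1
  have hbp : b + D < 0 := by linarith
  have hbm : b - D < 0 := by linarith
  set u : ℝ := Γ / Real.sqrt 2 * Real.sqrt |b + D| with hu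
  set v : ℝ := Γ / Real.sqrt 2 * Real.sqrt |b - D| with hv
  have h2 : (Real.sqrt 2) ^ 2 = 2 := Real.sq_sqrt (by norm_num)
  have hu2 : u ^ 2 = Γ ^ 2 * (-(b + D)) / 2 := by
    rw [hu, mul_pow, div_pow, h2, Real.sq_sqrt (abs_nonneg _), abs_of_neg hbp]
    ring
  have hv2 : v ^ 2 = Γ ^ 2 * (-(b - D)) / 2 := by
    rw [hv, mul_pow, div_pow, h2, Real.sq_sqrt (abs_nonneg _), abs_of_neg hbm]
    ring
  have hsum : u ^ 2 + v ^ 2 = (a₁ * a₂ + a₂ * a₃ + a₃ * a₄) * Γ ^ 2 := by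
    rw [hu2, hv2, ← neg_eq_iff_eq_neg.mpr hb]; ring
  have hprod : u ^ 2 * v ^ 2 = (a₁ * a₂ * a₃ * a₄) * Γ ^ 4 := by
    rw [hu2, hv2]
    linear_combination (-(Γ ^ 4) / 4) * hD2 + Γ ^ 4 * hc
  have hsC : (u : ℂ) ^ 2 + (v : ℂ) ^ 2
      = ((a₁ : ℂ) * a₂ + (a₂ : ℂ) * a₃ + (a₃ : ℂ) * a₄) * (Γ : ℂ) ^ 2 := by
    exact_mod_cast congrArg Complex.ofReal hsum
  have hpC : (u : ℂ) ^ 2 * (v : ℂ) ^ 2 = ((a₁ : ℂ) * a₂ * a₃ * a₄) * (Γ : ℂ) ^ 4 := by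
    exact_mod_cast congrArg Complex.ofReal hprod
  have key : ∀ z : ℂ, z ^ 4 + ((a₁ : ℂ) * a₂ + (a₂ : ℂ) * a₃ + (a₃ : ℂ) * a₄) * (Γ : ℂ) ^ 2 * z ^ 2
        + ((a₁ : ℂ) * a₂ * a₃ * a₄) * (Γ : ℂ) ^ 4
      = (z - Complex.I * u) * (z + Complex.I * u) * (z - Complex.I * v) * (z + Complex.I * v) := by
    intro z
    have sqeq : ∀ r : ℝ, (z - Complex.I * r) * (z + Complex.I * r) = z ^ 2 + (r : ℂ) ^ 2 :=
      fun r => by linear_combination (-((r : ℂ) ^ 2)) * Complex.I_sq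
    calc z ^ 4 + ((a₁ : ℂ) * a₂ + (a₂ : ℂ) * a₃ + (a₃ : ℂ) * a₄) * (Γ : ℂ) ^ 2 * z ^ 2
          + ((a₁ : ℂ) * a₂ * a₃ * a₄) * (Γ : ℂ) ^ 4
        = (z ^ 2 + (u : ℂ) ^ 2) * (z ^ 2 + (v : ℂ) ^ 2) := by
          linear_combination (-(z ^ 2)) * hsC - hpC
      _ = ((z - Complex.I * u) * (z + Complex.I * u)) * ((z - Complex.I * v) * (z + Complex.I * v)) := by
          rw [sqeq, sqeq]
      _ = (z - Complex.I * u) * (z + Complex.I * u) * (z - Complex.I * v) * (z + Complex.I * v) := by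
          ring
  ext z
  rw [spectrum.mem_iff, Matrix.isUnit_iff_isUnit_det, isUnit_iff_ne_zero, not_ne_iff]
  show Matrix.det (algebraMap ℂ (Matrix (Fin 4) (Fin 4) ℂ) z -
      (!![0, -a₂ * Γ, 0, 0;
          a₁ * Γ, 0, -a₃ * Γ, 0;
          0, a₂ * Γ, 0, -a₄ * Γ;
          0, 0, a₃ * Γ, 0]).map Complex.ofReal) = 0 ↔ _
  rw [chopped_det_aux, key z, Set.mem_setOf_eq]
  have harg1 : b + (1 : ℝ) * Real.sqrt (b ^ 2 - 4 * c) = b + D := by rw [← hD]; ring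
  have harg2 : b + (-1 : ℝ) * Real.sqrt (b ^ 2 - 4 * c) = b - D := by rw [← hD]; ring
  constructor
  · intro h
    rcases mul_eq_zero.1 h with h | h
    · rcases mul_eq_zero.1 h with h | h
      · rcases mul_eq_zero.1 h with h | h
        · refine ⟨1, 1, Or.inl rfl, Or.inl rfl, ?_⟩
          rw [sub_eq_zero] at h
          rw [h, harg1, hu]; push_cast; ring
        · refine ⟨-1, 1, Or.inr rfl, Or.inl rfl, ?_⟩
          have hz : z = -(Complex.I * u) := by linear_combination h
          rw [hz, harg1, hu]; push_cast; ring
      · refine ⟨1, -1, Or.inl rfl, Or.inr rfl, ?_⟩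
        rw [sub_eq_zero] at h
        rw [h, harg2, hv]; push_cast; ring
    · refine ⟨-1, -1, Or.inr rfl, Or.inr rfl, ?_⟩
      have hz : z = -(Complex.I * v) := by linear_combination h
      rw [hz, harg2, hv]; push_cast; ring
  · rintro ⟨s, t, hs | hs, ht | ht, hz⟩ <;> subst hs <;> subst ht <;> subst hz
    · rw [harg1, hu]; push_cast; ring
    · rw [harg2, hv]; push_cast; ring
    · rw [harg1, hu]; push_cast; ring
    · rw [harg2, hv]; push_cast; ring
end

section
/- The quantity I = 2 A_{1,2}(ω_1 ω_3 + ω_2 ω_4) + A_2 ω_p^2 is a conserved quantity of the five-dimensional ODE system: its time derivative along any solution is identically zero. -/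
/-- `I = 2A₁₂(ω₁ω₃ + ω₂ω₄) + A₂ωₚ²` is conserved along solutions of the
five-dimensional invariant subsystem (here `A₁ = -3/10`, `A₂ = 1/2`, `A₁₂ = -4/5`). -/
theorem I_invariant (ω₁ ω₂ ω₃ ω₄ ωp : ℝ → ℝ)
    (A₁ A₂ A₁₂ : ℝ) (hA₁ : A₁ = -(3 / 10)) (hA₂ : A₂ = 1 / 2) (hA₁₂ : A₁₂ = -(4 / 5))
    (h₁ : ∀ t, HasDerivAt ω₁ (-A₂ * ωp t * ω₂ t) t)
    (h₂ : ∀ t, HasDerivAt ω₂ (A₁ * ωp t * ω₁ t - A₂ * ωp t * ω₃ t) t)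
    (h₃ : ∀ t, HasDerivAt ω₃ (A₂ * ωp t * ω₂ t - A₁ * ωp t * ω₄ t) t)
    (h₄ : ∀ t, HasDerivAt ω₄ (A₂ * ωp t * ω₃ t) t)
    (hp : ∀ t, HasDerivAt ωp (A₁₂ * (ω₃ t * ω₄ t - ω₁ t * ω₂ t)) t) :
    ∀ t, HasDerivAt
      (fun t => 2 * A₁₂ * (ω₁ t * ω₃ t + ω₂ t * ω₄ t) + A₂ * (ωp t) ^ 2) 0 t := by
  intro t
  have h := ((((h₁ t).mul (h₃ t)).add ((h₂ t).mul (h₄ t))).const_mul (2 * A₁₂)).add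
    (((hp t).mul (hp t)).const_mul A₂)
  have : HasDerivAt (fun t => 2 * A₁₂ * (ω₁ t * ω₃ t + ω₂ t * ω₄ t) + A₂ * (ωp t * ωp t))
      0 t := by
    refine h.congr_deriv ?_
    subst hA₁ hA₂ hA₁₂; ring
  simpa [sq] using this
end

section
/- The quantity U = A_1(ω_1^2 + ω_4^2) + A_2(ω_2^2 + ω_3^2) is a conserved quantity of the five-dimensional ODE system: dU/dt = 0 along any solution. -/
/-- `U = A₁(ω₁² + ω₄²) + A₂(ω₂² + ω₃²)` is conserved along solutions of the
five-dimensional invariant subsystem. -/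
theorem U_invariant (ω₁ ω₂ ω₃ ω₄ ωp : ℝ → ℝ) (A₁ A₂ A₁₂ : ℝ) (hA₁₂ : A₁₂ = A₁ - A₂)
    (h₁ : ∀ t, HasDerivAt ω₁ (-A₂ * ωp t * ω₂ t) t)
    (h₂ : ∀ t, HasDerivAt ω₂ (A₁ * ωp t * ω₁ t - A₂ * ωp t * ω₃ t) t)
    (h₃ : ∀ t, HasDerivAt ω₃ (A₂ * ωp t * ω₂ t - A₁ * ωp t * ω₄ t) t)
    (h₄ : ∀ t, HasDerivAt ω₄ (A₂ * ωp t * ω₃ t) t)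
    (hp : ∀ t, HasDerivAt ωp (A₁₂ * (ω₃ t * ω₄ t - ω₁ t * ω₂ t)) t) :
    ∀ t, HasDerivAt
      (fun t => A₁ * ((ω₁ t) ^ 2 + (ω₄ t) ^ 2) + A₂ * ((ω₂ t) ^ 2 + (ω₃ t) ^ 2)) 0 t := by
  intro t
  have := ((((h₁ t).pow 2).add ((h₄ t).pow 2)).const_mul A₁).add
    ((((h₂ t).pow 2).add ((h₃ t).pow 2)).const_mul A₂)
  refine this.congr_deriv ?_
  ring
end

section
/- The enstrophy J = ω_p^2 + ω_1^2 + ω_2^2 + ω_3^2 + ω_4^2 is a conserved quantity of the five-dimensional ODE system provided A_{1,2} = A_1 - A_2. -/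
/-- The enstrophy `J = ωₚ² + ω₁² + ω₂² + ω₃² + ω₄²` is conserved along solutions of the
five-dimensional invariant subsystem, provided `A₁₂ = A₁ - A₂`. -/
theorem J_invariant (ω₁ ω₂ ω₃ ω₄ ωp : ℝ → ℝ) (A₁ A₂ A₁₂ : ℝ) (hA₁₂ : A₁₂ = A₁ - A₂)
    (h₁ : ∀ t, HasDerivAt ω₁ (-A₂ * ωp t * ω₂ t) t)
    (h₂ : ∀ t, HasDerivAt ω₂ (A₁ * ωp t * ω₁ t - A₂ * ωp t * ω₃ t) t)
    (h₃ : ∀ t, HasDerivAt ω₃ (A₂ * ωp t * ω₂ t - A₁ * ωp t * ω₄ t) t)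
    (h₄ : ∀ t, HasDerivAt ω₄ (A₂ * ωp t * ω₃ t) t)
    (hp : ∀ t, HasDerivAt ωp (A₁₂ * (ω₃ t * ω₄ t - ω₁ t * ω₂ t)) t) :
    ∀ t, HasDerivAt
      (fun t => (ωp t) ^ 2 + (ω₁ t) ^ 2 + (ω₂ t) ^ 2 + (ω₃ t) ^ 2 + (ω₄ t) ^ 2) 0 t := by
  intro t
  have H := ((((((hp t).pow 2).add ((h₁ t).pow 2)).add ((h₂ t).pow 2)).add
      ((h₃ t).pow 2)).add ((h₄ t).pow 2))
  have H' : HasDerivAt (fun t => (ωp t) ^ 2 + (ω₁ t) ^ 2 + (ω₂ t) ^ 2 + (ω₃ t) ^ 2 + (ω₄ t) ^ 2) _ t := H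
  convert H' using 1
  subst hA₁₂
  ring
end

section
/- For the complex five-dimensional system, the real quantity J_c = |ω_p|^2 + |ω_1|^2 + |ω_2|^2 + |ω_3|^2 + |ω_4|^2 is conserved: its time derivative along any solution vanishes, provided A_{1,2} = A_1 - A_2 and A_1, A_2 are real. -/
lemma hasDerivAt_normSq_comp (f : ℝ → ℂ) (f' : ℂ) (t : ℝ) (h : HasDerivAt f f' t) :
    HasDerivAt (fun t => Complex.normSq (f t))
      (f' * (starRingEnd ℂ) (f t) + f t * (starRingEnd ℂ) f').re t := by
  have hc : HasDerivAt (fun t => (starRingEnd ℂ) (f t)) ((starRingEnd ℂ) f') t := h.star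
  have hm := h.mul hc
  have hre := Complex.reCLM.hasFDerivAt.comp_hasDerivAt t hm
  simpa [Function.comp_def, Pi.mul_apply, Complex.mul_conj, Complex.ofReal_re] using hre

/-- For the complex five-dimensional system, the real quantity
`J_c = |ωₚ|² + |ω₁|² + |ω₂|² + |ω₃|² + |ω₄|²` is conserved, provided `A₁₂ = A₁ - A₂`. -/
theorem Jc_invariant (ω₁ ω₂ ω₃ ω₄ ωp : ℝ → ℂ) (A₁ A₂ A₁₂ : ℝ) (hA₁₂ : A₁₂ = A₁ - A₂)
    (h₁ : ∀ t, HasDerivAt ω₁ (-(A₂ : ℂ) * (starRingEnd ℂ) (ωp t) * ω₂ t) t)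
    (h₂ : ∀ t, HasDerivAt ω₂
      ((A₁ : ℂ) * ωp t * ω₁ t - (A₂ : ℂ) * (starRingEnd ℂ) (ωp t) * ω₃ t) t)
    (h₃ : ∀ t, HasDerivAt ω₃
      ((A₂ : ℂ) * ωp t * ω₂ t - (A₁ : ℂ) * (starRingEnd ℂ) (ωp t) * ω₄ t) t)
    (h₄ : ∀ t, HasDerivAt ω₄ ((A₂ : ℂ) * ωp t * ω₃ t) t)
    (hp : ∀ t, HasDerivAt ωp
      ((A₁₂ : ℂ) * ((starRingEnd ℂ) (ω₃ t) * ω₄ t - (starRingEnd ℂ) (ω₁ t) * ω₂ t)) t) :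
    ∀ t, HasDerivAt
      (fun t => Complex.normSq (ωp t) + Complex.normSq (ω₁ t) + Complex.normSq (ω₂ t)
        + Complex.normSq (ω₃ t) + Complex.normSq (ω₄ t)) (0 : ℝ) t := by
  intro t
  have Hp := hasDerivAt_normSq_comp ωp _ t (hp t)
  have H1 := hasDerivAt_normSq_comp ω₁ _ t (h₁ t)
  have H2 := hasDerivAt_normSq_comp ω₂ _ t (h₂ t)
  have H3 := hasDerivAt_normSq_comp ω₃ _ t (h₃ t)
  have H4 := hasDerivAt_normSq_comp ω₄ _ t (h₄ t)
  have H := ((((Hp.add H1).add H2).add H3).add H4)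
  refine H.congr_deriv ?_
  symm
  simp only [← Complex.add_re]
  rw [show ((0:ℝ) = (0:ℂ).re) from rfl]
  congr 1
  subst hA₁₂
  simp only [map_mul, map_sub, map_add, map_neg, Complex.conj_conj, Complex.conj_ofReal,
    Complex.ofReal_sub]
  ring
end

section
/- For the complex five-dimensional system, the complex quantity I_c = 2 A_{1,2}(conj(ω_1) ω_3 + conj(ω_2) ω_4) + A_2 ω_p^2 is conserved along solutions. -/
/-- For the complex five-dimensional system, the complex quantity
`I_c = 2A₁₂(conj(ω₁)ω₃ + conj(ω₂)ω₄) + A₂ωₚ²` is conserved along solutions. -/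
theorem Ic_invariant (ω₁ ω₂ ω₃ ω₄ ωp : ℝ → ℂ) (A₁ A₂ A₁₂ : ℝ) (hA₁₂ : A₁₂ = A₁ - A₂)
    (h₁ : ∀ t, HasDerivAt ω₁ (-(A₂ : ℂ) * (starRingEnd ℂ) (ωp t) * ω₂ t) t)
    (h₂ : ∀ t, HasDerivAt ω₂
      ((A₁ : ℂ) * ωp t * ω₁ t - (A₂ : ℂ) * (starRingEnd ℂ) (ωp t) * ω₃ t) t)
    (h₃ : ∀ t, HasDerivAt ω₃
      ((A₂ : ℂ) * ωp t * ω₂ t - (A₁ : ℂ) * (starRingEnd ℂ) (ωp t) * ω₄ t) t)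
    (h₄ : ∀ t, HasDerivAt ω₄ ((A₂ : ℂ) * ωp t * ω₃ t) t)
    (hp : ∀ t, HasDerivAt ωp
      ((A₁₂ : ℂ) * ((starRingEnd ℂ) (ω₃ t) * ω₄ t - (starRingEnd ℂ) (ω₁ t) * ω₂ t)) t) :
    ∀ t, HasDerivAt
      (fun t => 2 * (A₁₂ : ℂ) * ((starRingEnd ℂ) (ω₁ t) * ω₃ t
        + (starRingEnd ℂ) (ω₂ t) * ω₄ t) + (A₂ : ℂ) * (ωp t) ^ 2) (0 : ℂ) t := by
  intro t
  have c1 := (h₁ t).star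
  have c2 := (h₂ t).star
  have H := ((((c1.mul (h₃ t)).add (c2.mul (h₄ t))).const_mul (2 * (A₁₂ : ℂ))).add
    (((hp t).mul (hp t)).const_mul (A₂ : ℂ)))
  simp only [pow_two]
  refine (H.congr_of_eventuallyEq (Filter.Eventually.of_forall fun y => ?_)).congr_deriv ?_
  · simp only [Pi.add_apply, Pi.mul_apply, starRingEnd_apply]
  simp only [starRingEnd_apply] at *
  simp only [star_mul, star_neg, star_sub, star_star, star_trivial, Complex.star_def,
    Complex.conj_ofReal, Complex.conj_conj, hA₁₂]
  push_cast
  ring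
end

section
/- The explicit curves defined by ω_p(t) = Γ tanh τ, ω_1 = r cos θ, ω_4 = r sin θ, ω_2 = ρ cos ϑ, ω_3 = ρ sin ϑ, with r = √(A_2/(A_2 - A_1)) Γ sech τ, ρ = √(-A_1/A_2) r, θ = -(A_2/(2κ)) ln cosh τ + θ_0, θ + ϑ constant with cos(θ+ϑ) = κ/√(-A_1 A_2), τ = κΓt + τ_0, and κ = ±√(-A_1 A_2)√(1 + A_2/(4A_1)), solve the five-dimensional ODE system ω_1' = -A_2 ω_p ω_2, ω_2' = A_1 ω_p ω_1 - A_2 ω_p ω_3, ω_3' = A_2 ω_p ω_2 - A_1 ω_p ω_4, ω_4' = A_2 ω_p ω_3, ω_p' = A_{1,2}(ω_3 ω_4 - ω_1 ω_2), where A_1 = -3/10, A_2 = 1/2, A_{1,2} = -4/5. -/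
set_option maxHeartbeats 2000000 in
/-- The explicit perverted heteroclinic orbits solve the five-dimensional invariant
subsystem of the dashed-line model at `ε = 0`. Here `c = θ + ϑ` is the constant value
prescribed in the paper, `κ = √(-A₁A₂) cos c = ±√(-A₁A₂)√(1 + A₂/(4A₁))`,
`τ = κΓt + τ₀`, and `A₁ = -3/10`, `A₂ = 1/2`, `A₁₂ = -4/5`. -/
theorem perverted_heteroclinic_orbit (Γ θ₀ τ₀ κ c : ℝ)
    (A₁ A₂ A₁₂ : ℝ) (hA₁ : A₁ = -(3 / 10)) (hA₂ : A₂ = 1 / 2) (hA₁₂ : A₁₂ = -(4 / 5))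
    (hc : (0 < κ ∧ c = -Real.arcsin ((1 / 2) * Real.sqrt (A₂ / (-A₁))))
        ∨ (κ < 0 ∧ c = Real.pi + Real.arcsin ((1 / 2) * Real.sqrt (A₂ / (-A₁)))))
    (hκ : κ = Real.sqrt (-(A₁ * A₂)) * Real.cos c) :
    let τ : ℝ → ℝ := fun t => κ * Γ * t + τ₀
    let ωp : ℝ → ℝ := fun t => Γ * Real.tanh (τ t)
    let r : ℝ → ℝ := fun t => Real.sqrt (A₂ / (A₂ - A₁)) * Γ * (Real.cosh (τ t))⁻¹
    let θ : ℝ → ℝ := fun t => -(A₂ / (2 * κ)) * Real.log (Real.cosh (τ t)) + θ₀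
    let ρ : ℝ → ℝ := fun t => Real.sqrt (-A₁ / A₂) * r t
    let ω₁ : ℝ → ℝ := fun t => r t * Real.cos (θ t)
    let ω₄ : ℝ → ℝ := fun t => r t * Real.sin (θ t)
    let ω₂ : ℝ → ℝ := fun t => ρ t * Real.cos (c - θ t)
    let ω₃ : ℝ → ℝ := fun t => ρ t * Real.sin (c - θ t)
    ∀ t : ℝ,
      HasDerivAt ω₁ (-A₂ * ωp t * ω₂ t) t
      ∧ HasDerivAt ω₂ (A₁ * ωp t * ω₁ t - A₂ * ωp t * ω₃ t) t
      ∧ HasDerivAt ω₃ (A₂ * ωp t * ω₂ t - A₁ * ωp t * ω₄ t) t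
      ∧ HasDerivAt ω₄ (A₂ * ωp t * ω₃ t) t
      ∧ HasDerivAt ωp (A₁₂ * (ω₃ t * ω₄ t - ω₁ t * ω₂ t)) t := by
  intro τ ωp r θ ρ ω₁ ω₄ ω₂ ω₃ t
  -- numeric facts about the square roots
  have hb2 : Real.sqrt (-A₁ / A₂) ^ 2 = 3 / 5 := by
    rw [Real.sq_sqrt (by rw [hA₁, hA₂]; norm_num)]; rw [hA₁, hA₂]; norm_num
  have hb0 : (0:ℝ) < Real.sqrt (-A₁ / A₂) := by
    apply Real.sqrt_pos.2; rw [hA₁, hA₂]; norm_num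
  set b := Real.sqrt (-A₁ / A₂) with hbdef
  have ha2 : Real.sqrt (A₂ / (A₂ - A₁)) ^ 2 = 5 / 8 := by
    rw [Real.sq_sqrt (by rw [hA₁, hA₂]; norm_num)]; rw [hA₁, hA₂]; norm_num
  set a := Real.sqrt (A₂ / (A₂ - A₁)) with hadef
  -- sin c and cos c
  have harg : (1 / 2 : ℝ) * Real.sqrt (A₂ / (-A₁)) = 1 / (2 * b) := by
    rw [eq_div_iff (by positivity)]
    have : Real.sqrt (A₂ / (-A₁)) * b = 1 := by
      rw [hbdef, ← Real.sqrt_mul (by rw [hA₁, hA₂]; norm_num)]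
      rw [show A₂ / (-A₁) * (-A₁ / A₂) = 1 by
        rw [hA₁, hA₂]; norm_num, Real.sqrt_one]
    linear_combination this
  have hsinc : Real.sin c = -(1 / (2 * b)) := by
    have hle : (1 / 2 : ℝ) * Real.sqrt (A₂ / (-A₁)) ≤ 1 := by
      rw [harg]
      rw [div_le_one (by positivity)]
      nlinarith [hb2, hb0]
    have hge : (-1 : ℝ) ≤ (1 / 2 : ℝ) * Real.sqrt (A₂ / (-A₁)) := by
      have := Real.sqrt_nonneg (A₂ / (-A₁)); linarith
    rcases hc with ⟨_, hc⟩ | ⟨_, hc⟩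
    · rw [hc, Real.sin_neg, Real.sin_arcsin hge hle, harg]
    · rw [hc, Real.sin_add, Real.sin_pi, Real.cos_pi, Real.sin_arcsin hge hle, harg]; ring
  have hcosc : Real.cos c = 2 * κ / b := by
    rw [eq_div_iff hb0.ne']
    have h320 : Real.sqrt (-(A₁ * A₂)) * 2 = b := by
      rw [hbdef, show (2:ℝ) = Real.sqrt 4 by
          rw [show (4:ℝ) = 2 ^ 2 by norm_num, Real.sqrt_sq (by norm_num : (0:ℝ) ≤ 2)],
        ← Real.sqrt_mul (by rw [hA₁, hA₂]; norm_num)]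
      congr 1; rw [hA₁, hA₂]; norm_num
    rw [hκ]; linear_combination (-Real.cos c) * h320
  have hκ2 : κ ^ 2 = 7 / 80 := by
    have := Real.sin_sq_add_cos_sq c
    rw [hsinc, hcosc] at this
    have hb2' := hb2
    field_simp at this
    nlinarith [this, hb2, hb0]
  have hκ0 : κ ≠ 0 := by intro h; rw [h] at hκ2; norm_num at hκ2
  -- derivative building blocks
  set T := κ * Γ * t + τ₀ with hT
  have hCne : Real.cosh T ≠ 0 := (Real.cosh_pos T).ne'
  have hτ : HasDerivAt (fun u : ℝ => κ * Γ * u + τ₀) (κ * Γ) t := by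
    simpa using ((hasDerivAt_id t).const_mul (κ * Γ)).add_const τ₀
  have hch : HasDerivAt (fun u : ℝ => Real.cosh (κ * Γ * u + τ₀)) (Real.sinh T * (κ * Γ)) t :=
    hτ.cosh
  have hsech : HasDerivAt (fun u : ℝ => (Real.cosh (κ * Γ * u + τ₀))⁻¹)
      (-(Real.sinh T * (κ * Γ)) / Real.cosh T ^ 2) t := hch.inv hCne
  have hr : HasDerivAt r (a * Γ * (-(Real.sinh T * (κ * Γ)) / Real.cosh T ^ 2)) t :=
    hsech.const_mul (a * Γ)
  have hθ : HasDerivAt θ (-(A₂ / (2 * κ)) * (Real.sinh T * (κ * Γ) / Real.cosh T)) t := by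
    exact ((hch.log hCne).const_mul (-(A₂ / (2 * κ)))).add_const θ₀
  set θ' : ℝ := -(A₂ / (2 * κ)) * (Real.sinh T * (κ * Γ) / Real.cosh T) with hθ'def
  set S := Real.sinh T with hS
  set C := Real.cosh T with hC
  have htanh : Real.tanh T = S / C := Real.tanh_eq_sinh_div_cosh T
  have hθT : θ t = -(A₂ / (2 * κ)) * Real.log C + θ₀ := rfl
  set Θ := θ t with hΘ
  -- component derivatives
  have h1 : HasDerivAt ω₁
      (a * Γ * (-(S * (κ * Γ)) / C ^ 2) * Real.cos Θ + (a * Γ * C⁻¹) * (-Real.sin Θ * θ')) t := by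
    exact hr.mul hθ.cos
  have h4 : HasDerivAt ω₄
      (a * Γ * (-(S * (κ * Γ)) / C ^ 2) * Real.sin Θ + (a * Γ * C⁻¹) * (Real.cos Θ * θ')) t := by
    exact hr.mul hθ.sin
  have hρ : HasDerivAt ρ (b * (a * Γ * (-(S * (κ * Γ)) / C ^ 2))) t := hr.const_mul b
  have hcθ : HasDerivAt (fun u => c - θ u) (-θ') t := hθ.const_sub c
  have h2 : HasDerivAt ω₂
      (b * (a * Γ * (-(S * (κ * Γ)) / C ^ 2)) * Real.cos (c - Θ)
        + (b * (a * Γ * C⁻¹)) * (-Real.sin (c - Θ) * (-θ'))) t := hρ.mul hcθ.cos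
  have h3 : HasDerivAt ω₃
      (b * (a * Γ * (-(S * (κ * Γ)) / C ^ 2)) * Real.sin (c - Θ)
        + (b * (a * Γ * C⁻¹)) * (Real.cos (c - Θ) * (-θ'))) t := hρ.mul hcθ.sin
  have h5 : HasDerivAt ωp (Γ * ((1 - (S / C) ^ 2) * (κ * Γ))) t := by
    have hdiv : HasDerivAt (fun u : ℝ => Real.sinh (κ * Γ * u + τ₀) / Real.cosh (κ * Γ * u + τ₀))
        ((Real.cosh T * (κ * Γ) * Real.cosh T - Real.sinh T * (Real.sinh T * (κ * Γ))) / Real.cosh T ^ 2)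
        t := (hτ.sinh).div hch hCne
    have : ωp = fun u => Γ * (Real.sinh (κ * Γ * u + τ₀) / Real.cosh (κ * Γ * u + τ₀)) := by
      funext u; simp only [ωp, τ, Real.tanh_eq_sinh_div_cosh]
    rw [this]
    have e : Γ * ((Real.cosh T * (κ * Γ) * Real.cosh T - Real.sinh T * (Real.sinh T * (κ * Γ)))
        / Real.cosh T ^ 2) = Γ * ((1 - (S / C) ^ 2) * (κ * Γ)) := by
      rw [← hS, ← hC]
      field_simp
    exact e ▸ hdiv.const_mul Γ
  -- trig expansions and value facts
  have hcs : Real.cos (c - Θ) = Real.cos c * Real.cos Θ + Real.sin c * Real.sin Θ :=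
    Real.cos_sub c Θ
  have hss : Real.sin (c - Θ) = Real.sin c * Real.cos Θ - Real.cos c * Real.sin Θ :=
    Real.sin_sub c Θ
  have hpyth : Real.sin Θ ^ 2 + Real.cos Θ ^ 2 = 1 := Real.sin_sq_add_cos_sq Θ
  have hωp : ωp t = Γ * (S / C) := by
    show Γ * Real.tanh (τ t) = _
    rw [show τ t = T from rfl, htanh]
  have hω1 : ω₁ t = a * Γ * C⁻¹ * Real.cos Θ := rfl
  have hω4 : ω₄ t = a * Γ * C⁻¹ * Real.sin Θ := rfl
  have hω2 : ω₂ t = b * (a * Γ * C⁻¹) * Real.cos (c - Θ) := by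
    show Real.sqrt (-A₁ / A₂) * (Real.sqrt (A₂ / (A₂ - A₁)) * Γ * (Real.cosh (τ t))⁻¹)
      * Real.cos (c - θ t) = _
    rw [← hbdef, ← hadef]
  have hω3 : ω₃ t = b * (a * Γ * C⁻¹) * Real.sin (c - Θ) := by
    show Real.sqrt (-A₁ / A₂) * (Real.sqrt (A₂ / (A₂ - A₁)) * Γ * (Real.cosh (τ t))⁻¹)
      * Real.sin (c - θ t) = _
    rw [← hbdef, ← hadef]
  have hC2 : C ^ 2 - S ^ 2 = 1 := Real.cosh_sq_sub_sinh_sq T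
  clear_value T
  clear_value S C Θ a b θ'
  refine ⟨?_, ?_, ?_, ?_, ?_⟩
  · have key : -A₂ * ωp t * ω₂ t
        = a * Γ * (-(S * (κ * Γ)) / C ^ 2) * Real.cos Θ + (a * Γ * C⁻¹) * (-Real.sin Θ * θ') := by
      rw [hωp, hω2, hcs, hsinc, hcosc, hθ'def, hA₂]
      clear * - hκ2 hb2 ha2 hb0 hκ0 hCne hC2 hpyth
      field_simp [hκ0, hCne, hb0.ne']
      try ring
    rw [key]
    exact h1
  · have key : A₁ * ωp t * ω₁ t - A₂ * ωp t * ω₃ t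
        = b * (a * Γ * (-(S * (κ * Γ)) / C ^ 2)) * Real.cos (c - Θ)
          + (b * (a * Γ * C⁻¹)) * (-Real.sin (c - Θ) * (-θ')) := by
      rw [hωp, hω1, hω3, hcs, hss, hsinc, hcosc, hθ'def, hA₁, hA₂]
      clear * - hκ2 hb2 ha2 hb0 hκ0 hCne hC2 hpyth
      field_simp [hκ0, hCne, hb0.ne']
      linear_combination (160 * Γ ^ 2 * S * a * Real.cos Θ) * hκ2
    rw [key]
    exact h2
  · have key : A₂ * ωp t * ω₂ t - A₁ * ωp t * ω₄ t
        = b * (a * Γ * (-(S * (κ * Γ)) / C ^ 2)) * Real.sin (c - Θ)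
          + (b * (a * Γ * C⁻¹)) * (Real.cos (c - Θ) * (-θ')) := by
      rw [hωp, hω2, hω4, hcs, hss, hsinc, hcosc, hθ'def, hA₁, hA₂]
      clear * - hκ2 hb2 ha2 hb0 hκ0 hCne hC2 hpyth
      field_simp [hκ0, hCne, hb0.ne']
      linear_combination (-160 * Γ ^ 2 * S * a * Real.sin Θ) * hκ2
    rw [key]
    exact h3
  · have key : A₂ * ωp t * ω₃ t
        = a * Γ * (-(S * (κ * Γ)) / C ^ 2) * Real.sin Θ + (a * Γ * C⁻¹) * (Real.cos Θ * θ') := by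
      rw [hωp, hω3, hss, hsinc, hcosc, hθ'def, hA₂]
      clear * - hκ2 hb2 ha2 hb0 hκ0 hCne hC2 hpyth
      field_simp [hκ0, hCne, hb0.ne']
      try ring
    rw [key]
    exact h4
  · have key : A₁₂ * (ω₃ t * ω₄ t - ω₁ t * ω₂ t) = Γ * ((1 - (S / C) ^ 2) * (κ * Γ)) := by
      rw [hω1, hω2, hω3, hω4, hcs, hss, hsinc, hcosc, hA₁₂]
      clear * - hκ2 hb2 ha2 hb0 hκ0 hCne hC2 hpyth
      field_simp [hκ0, hCne, hb0.ne']
      linear_combination (16 * Γ ^ 2 * κ * (Real.sin Θ ^ 2 + Real.cos Θ ^ 2)) * ha2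
        - (10 * Γ ^ 2 * κ) * hC2 + (10 * Γ ^ 2 * κ) * hpyth
    rw [key]
    exact h5
end

section
/- Let Δ(t) = ⟨∇U(ω^{(0)}(t)), w(t)⟩ where ω^{(0)} solves ω' = f(ω), U is a C^2 invariant of f, and w solves the inhomogeneous variational equation w' = ∇f(ω^{(0)}) ∘ w + h. Then Δ'(t) = ⟨∇U(ω^{(0)}(t)), h(t)⟩ for all t. -/
/-- If `U` is a `C²` invariant of the `C¹` vector field `f`, `ω⁰` solves `ω' = f(ω)`,
and `w` solves the inhomogeneous variational equation `w' = Df(ω⁰)w + h`, then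
`Δ(t) = ⟨∇U(ω⁰(t)), w(t)⟩` satisfies `Δ'(t) = ⟨∇U(ω⁰(t)), h(t)⟩`. -/
theorem melnikov_derivative_identity (n : ℕ)
    (f : EuclideanSpace ℝ (Fin n) → EuclideanSpace ℝ (Fin n))
    (U : EuclideanSpace ℝ (Fin n) → ℝ)
    (hf : ContDiff ℝ 1 f) (hU : ContDiff ℝ 2 U)
    (hinv : ∀ ω, fderiv ℝ U ω (f ω) = 0)
    (ω₀ w h : ℝ → EuclideanSpace ℝ (Fin n)) (hcont : Continuous h)
    (hω₀ : ∀ t, HasDerivAt ω₀ (f (ω₀ t)) t)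
    (hw : ∀ t, HasDerivAt w ((fderiv ℝ f (ω₀ t)) (w t) + h t) t) :
    ∀ t, HasDerivAt (fun t => fderiv ℝ U (ω₀ t) (w t))
      (fderiv ℝ U (ω₀ t) (h t)) t := by
  intro t
  have hUd : Differentiable ℝ U := hU.differentiable (by norm_num)
  have hU1 : ContDiff ℝ 1 (fderiv ℝ U) := hU.fderiv_right (by norm_num)
  have hU'd : Differentiable ℝ (fderiv ℝ U) := hU1.differentiable one_ne_zero
  have hfd : Differentiable ℝ f := hf.differentiable one_ne_zero
  set x := ω₀ t
  set U'' := fderiv ℝ (fderiv ℝ U) x with hU''def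
  -- derivative of t ↦ fderiv U (ω₀ t)
  have hB : HasDerivAt (fun s => fderiv ℝ U (ω₀ s)) (U'' (f x)) t :=
    ((hU'd x).hasFDerivAt).comp_hasDerivAt t (hω₀ t)
  -- cancellation: for all v, U'' v (f x) + fderiv U x (fderiv f x v) = 0
  have hcancel : ∀ v, U'' v (f x) + fderiv ℝ U x (fderiv ℝ f x v) = 0 := by
    intro v
    have hg : HasFDerivAt (fun y => fderiv ℝ U y (f y))
        (((fderiv ℝ U x).comp (fderiv ℝ f x)) + (U''.flip (f x))) x :=
      ((hU'd x).hasFDerivAt).clm_apply ((hfd x).hasFDerivAt)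
    have hzero : (fun y => fderiv ℝ U y (f y)) = fun _ => (0:ℝ) := by
      funext y; exact hinv y
    have : (((fderiv ℝ U x).comp (fderiv ℝ f x)) + (U''.flip (f x))) = 0 := by
      rw [hzero] at hg
      exact hg.unique (hasFDerivAt_const 0 x)
    have := congrFun (congrArg (fun (L : _ →L[ℝ] ℝ) => (L : _ → ℝ)) this) v
    simpa [add_comm] using this
  -- symmetry of the second derivative
  have hsymm : ∀ a b, U'' a b = U'' b a := fun a b =>
    second_derivative_symmetric (fun y => (hUd y).hasFDerivAt) ((hU'd x).hasFDerivAt) a b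
  have key : HasDerivAt (fun s => fderiv ℝ U (ω₀ s) (w s))
      (U'' (f x) (w t) + fderiv ℝ U x ((fderiv ℝ f x) (w t) + h t)) t :=
    hB.clm_apply (hw t)
  have : U'' (f x) (w t) + fderiv ℝ U x ((fderiv ℝ f x) (w t) + h t)
      = fderiv ℝ U x (h t) := by
    have h1 := hcancel (w t)
    rw [hsymm (f x) (w t), map_add]
    linarith
  rwa [this] at key
end
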